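/- Let γ : U × V → W be a flat bilinear map and let X ∈ U be a regular element such that the form ⟨·,·⟩ restricted to γ^X(V) is nondegenerate, i.e. γ^X(V) ∩ (γ^X(V))^⊥ = {0}. Then the kernel of γ^X equals the right nullity of γ; that is, every Z ∈ V with γ(X,Z) = 0 satisfies γ(Y,Z) = 0 for all Y ∈ U. -/
import Mathlib

open Module Polynomial

section aux
variable {𝔽 W : Type*} [Field 𝔽] [AddCommGroup W] [Module 𝔽 W]

lemma aux_coeffs_zero {m : ℕ} (u : Fin m → W) (φ : Fin m → (W →ₗ[𝔽] 𝔽))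
    (hd : (Matrix.of fun j k => φ k (u j)).det ≠ 0) {c : Fin m → 𝔽}
    (hrel : ∑ j, c j • u j = 0) : c = 0 := by
  have key : ∀ k, ∑ j, φ k (u j) * c j = 0 := by
    intro k
    have := congrArg (φ k) hrel
    simpa [map_sum, mul_comm] using this
  have hmv : (Matrix.of fun j k => φ k (u j)).transpose.mulVec c = 0 := by
    funext k
    simpa [Matrix.mulVec, Matrix.transpose_apply, dotProduct] using key k
  exact Matrix.eq_zero_of_mulVec_eq_zero (by rwa [Matrix.det_transpose]) hmv

lemma aux_linearIndependent {m : ℕ} (u : Fin m → W) (φ : Fin m → (W →ₗ[𝔽] 𝔽))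
    (hd : (Matrix.of fun j k => φ k (u j)).det ≠ 0) : LinearIndependent 𝔽 u := by
  rw [Fintype.linearIndependent_iff]
  intro c hc i
  exact congrFun (aux_coeffs_zero u φ hd hc) i

lemma aux_exists_dual {m : ℕ} {g : Fin m → W} (hg : LinearIndependent 𝔽 g) :
    ∃ φ : Fin m → (W →ₗ[𝔽] 𝔽), ∀ j k, φ k (g j) = if j = k then 1 else 0 := by
  classical
  let b := Basis.span hg
  have hchoice : ∀ k : Fin m, ∃ ψ : W →ₗ[𝔽] 𝔽,
      ψ.comp (Submodule.span 𝔽 (Set.range g)).subtype = b.coord k :=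
    fun k => LinearMap.exists_extend (b.coord k)
  choose φ hφ using hchoice
  refine ⟨φ, fun j k => ?_⟩
  have hmem : g j ∈ Submodule.span 𝔽 (Set.range g) :=
    Submodule.subset_span (Set.mem_range_self j)
  have h1 : φ k (g j) = b.coord k ⟨g j, hmem⟩ := by
    have := congrFun (congrArg (fun (f : _ →ₗ[𝔽] 𝔽) => (f : _ → 𝔽)) (hφ k)) ⟨g j, hmem⟩
    simpa using this
  have h2 : (⟨g j, hmem⟩ : Submodule.span 𝔽 (Set.range g)) = b j := by
    apply Subtype.ext
    simp [b, Basis.span_apply]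
  rw [h1, h2, Basis.coord_apply, Basis.repr_self, Finsupp.single_apply]

end aux

/-- `X` is a (left) regular element of the bilinear map `γ` if the dimension of
`γ^X(V) = range (γ X)` is maximal among all `Y ∈ U`. -/
def IsRegularElement {𝔽 U V W : Type*} [RCLike 𝔽]
    [AddCommGroup U] [Module 𝔽 U] [AddCommGroup V] [Module 𝔽 V]
    [AddCommGroup W] [Module 𝔽 W]
    (γ : U →ₗ[𝔽] V →ₗ[𝔽] W) (X : U) : Prop :=
  ∀ Y : U, finrank 𝔽 (LinearMap.range (γ Y)) ≤ finrank 𝔽 (LinearMap.range (γ X))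

/-- Key step: the image of the kernel of `γ^X` under any `γ^Y` lies in `range (γ X)`. -/
theorem key_mem_range {𝔽 U V W : Type*} [RCLike 𝔽]
    [AddCommGroup U] [Module 𝔽 U]
    [AddCommGroup V] [Module 𝔽 V] [FiniteDimensional 𝔽 V]
    [AddCommGroup W] [Module 𝔽 W] [FiniteDimensional 𝔽 W]
    (γ : U →ₗ[𝔽] V →ₗ[𝔽] W)
    (X : U) (hX : IsRegularElement γ X)
    (Z : V) (hZ : γ X Z = 0) (Y : U) : γ Y Z ∈ LinearMap.range (γ X) := by
  classical
  by_contra hv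
  set v : W := γ Y Z with hvdef
  set r : ℕ := finrank 𝔽 (LinearMap.range (γ X)) with hr
  -- a basis of the range of γ X
  let b : Basis (Fin r) 𝔽 (LinearMap.range (γ X)) := finBasis 𝔽 _
  have hpre : ∀ j : Fin r, ∃ w : V, γ X w = (b j : W) := fun j => (b j).2
  choose Wv hWv using hpre
  -- the images of the Wv form an independent family spanning range (γ X)
  have hind0 : LinearIndependent 𝔽 (fun j : Fin r => γ X (Wv j)) := by
    have : LinearIndependent 𝔽 (fun j : Fin r =>
        ((LinearMap.range (γ X)).subtype (b j))) :=
      b.linearIndependent.map' _ (Submodule.ker_subtype _)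
    simpa [hWv] using this
  have hspan0 : Submodule.span 𝔽 (Set.range fun j : Fin r => γ X (Wv j))
      = LinearMap.range (γ X) := by
    have himg : (Set.range fun j : Fin r => γ X (Wv j))
        = ((LinearMap.range (γ X)).subtype) '' (Set.range b) := by
      ext w
      constructor
      · rintro ⟨j, rfl⟩; exact ⟨b j, ⟨j, rfl⟩, (hWv j).symm⟩
      · rintro ⟨x, ⟨j, rfl⟩, rfl⟩; exact ⟨j, hWv j⟩
    rw [himg, ← Submodule.map_span, b.span_eq, Submodule.map_top,
      Submodule.range_subtype]
  -- the snoc family is independent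
  have hg0 : LinearIndependent 𝔽
      (Fin.snoc (fun j : Fin r => γ X (Wv j)) v : Fin (r+1) → W) := by
    rw [linearIndependent_fin_snoc]
    exact ⟨hind0, by rw [hspan0]; exact hv⟩
  obtain ⟨φ, hφ⟩ := aux_exists_dual hg0
  -- the polynomial matrices
  set e : Fin (r+1) → Fin (r+1) → 𝔽[X] := fun j k =>
    (Fin.snoc (fun i : Fin r => C (φ k (γ X (Wv i))) + Polynomial.X * C (φ k (γ Y (Wv i))))
      (C (φ k v)) : Fin (r+1) → 𝔽[X]) j with he
  have heval : ∀ (t : 𝔽) (j k), (e j k).eval t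
      = φ k ((Fin.snoc (fun i : Fin r => γ (X + t • Y) (Wv i)) v : Fin (r+1) → W) j) := by
    intro t j k
    refine Fin.lastCases ?_ (fun i => ?_) j
    · simp [he]
    · simp only [he, Fin.snoc_castSucc, eval_add, eval_mul, eval_C, eval_X]
      have : γ (X + t • Y) (Wv i) = γ X (Wv i) + t • γ Y (Wv i) := by
        simp [map_add, map_smul]
      rw [this, map_add, map_smul, smul_eq_mul]
  have hgt0 : ∀ j, (Fin.snoc (fun i : Fin r => γ (X + (0:𝔽) • Y) (Wv i)) v
      : Fin (r+1) → W) j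
      = (Fin.snoc (fun j : Fin r => γ X (Wv j)) v : Fin (r+1) → W) j := by
    intro j
    refine Fin.lastCases ?_ (fun i => ?_) j
    · simp
    · simp
  set P : 𝔽[X] := (Matrix.of e).det with hP
  set Q : 𝔽[X] := (Matrix.of fun j k : Fin r => e j.castSucc k.castSucc).det with hQ
  -- evaluations of the determinants
  have hPeval : ∀ t : 𝔽, P.eval t = (Matrix.of fun j k : Fin (r+1) =>
      φ k ((Fin.snoc (fun i : Fin r => γ (X + t • Y) (Wv i)) v : Fin (r+1) → W) j)).det := by
    intro t
    rw [hP, ← Polynomial.coe_evalRingHom, RingHom.map_det]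
    congr 1
    ext j k
    simp only [RingHom.mapMatrix_apply, Matrix.map_apply, Matrix.of_apply,
      Polynomial.coe_evalRingHom]
    exact heval t j k
  have hQeval : ∀ t : 𝔽, Q.eval t = (Matrix.of fun j k : Fin r =>
      φ k.castSucc (γ (X + t • Y) (Wv j))).det := by
    intro t
    rw [hQ, ← Polynomial.coe_evalRingHom, RingHom.map_det]
    congr 1
    ext j k
    simp only [RingHom.mapMatrix_apply, Matrix.map_apply, Matrix.of_apply,
      Polynomial.coe_evalRingHom]
    have := heval t j.castSucc k.castSucc
    simpa [Fin.snoc_castSucc] using this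
  -- values at 0 are 1
  have hP0 : P.eval 0 = 1 := by
    rw [hPeval 0]
    have : (Matrix.of fun j k : Fin (r+1) =>
        φ k ((Fin.snoc (fun i : Fin r => γ (X + (0:𝔽) • Y) (Wv i)) v : Fin (r+1) → W) j))
        = (1 : Matrix (Fin (r+1)) (Fin (r+1)) 𝔽) := by
      ext j k
      rw [Matrix.of_apply, hgt0 j, hφ j k, Matrix.one_apply]
    rw [this, Matrix.det_one]
  have hQ0 : Q.eval 0 = 1 := by
    rw [hQeval 0]
    have : (Matrix.of fun j k : Fin r =>
        φ k.castSucc (γ (X + (0:𝔽) • Y) (Wv j))) = (1 : Matrix (Fin r) (Fin r) 𝔽) := by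
      ext j k
      have h1 : γ (X + (0:𝔽) • Y) (Wv j)
          = (Fin.snoc (fun j : Fin r => γ X (Wv j)) v : Fin (r+1) → W) j.castSucc := by
        simp
      rw [Matrix.of_apply, h1, hφ j.castSucc k.castSucc, Matrix.one_apply]
      simp [Fin.castSucc_inj]
    rw [this, Matrix.det_one]
  -- choose a good parameter t
  have hR : P * Q * Polynomial.X ≠ 0 := by
    intro h
    rcases mul_eq_zero.mp h with h' | h'
    · rcases mul_eq_zero.mp h' with h'' | h''
      · rw [h''] at hP0; simp at hP0
      · rw [h''] at hQ0; simp at hQ0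
    · exact Polynomial.X_ne_zero h'
  have : ∃ t : 𝔽, (P * Q * Polynomial.X).eval t ≠ 0 := by
    by_contra hcon
    push_neg at hcon
    exact hR (Polynomial.zero_of_eval_zero _ hcon)
  obtain ⟨t, ht⟩ := this
  rw [eval_mul, eval_mul, eval_X] at ht
  have hPt : P.eval t ≠ 0 := fun h => ht (by rw [h]; ring)
  have hQt : Q.eval t ≠ 0 := fun h => ht (by rw [h]; ring)
  have htne : t ≠ 0 := fun h => ht (by rw [h]; ring)
  -- the family h is independent
  set hfam : Fin r → W := fun i => γ (X + t • Y) (Wv i) with hhfam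
  have hind : LinearIndependent 𝔽 hfam := by
    apply aux_linearIndependent hfam (fun k => φ k.castSucc)
    have h := hQt
    rw [hQeval t] at h
    simpa [hhfam] using h
  -- span of hfam equals range of γ (X + t•Y)
  have hle : Submodule.span 𝔽 (Set.range hfam) ≤ LinearMap.range (γ (X + t • Y)) := by
    rw [Submodule.span_le]
    rintro w ⟨i, rfl⟩
    exact ⟨Wv i, rfl⟩
  have hfr : finrank 𝔽 (LinearMap.range (γ (X + t • Y)))
      ≤ finrank 𝔽 (Submodule.span 𝔽 (Set.range hfam)) := by
    rw [finrank_span_eq_card hind]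
    simpa using hX (X + t • Y)
  have hspaneq : Submodule.span 𝔽 (Set.range hfam) = LinearMap.range (γ (X + t • Y)) :=
    Submodule.eq_of_le_of_finrank_le hle hfr
  -- v lies in the span of hfam
  have hvmem : v ∈ Submodule.span 𝔽 (Set.range hfam) := by
    have h1 : γ (X + t • Y) Z = t • v := by
      simp [map_add, map_smul, hZ, hvdef]
    have h2 : t • v ∈ Submodule.span 𝔽 (Set.range hfam) := by
      rw [hspaneq]; exact ⟨Z, h1⟩
    have := Submodule.smul_mem _ t⁻¹ h2
    rwa [smul_smul, inv_mul_cancel₀ htne, one_smul] at this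
  rw [Submodule.mem_span_range_iff_exists_fun] at hvmem
  obtain ⟨c, hc⟩ := hvmem
  -- build the dependence relation on the snoc family at t
  set c' : Fin (r+1) → 𝔽 := Fin.snoc c (-1) with hc'
  have hrel : ∑ j, c' j • (Fin.snoc hfam v : Fin (r+1) → W) j = 0 := by
    rw [Fin.sum_univ_castSucc]
    simp only [hc', Fin.snoc_castSucc, Fin.snoc_last]
    rw [hc]
    simp
  have := aux_coeffs_zero (Fin.snoc hfam v) (fun k => φ k)
    (by
      have h := hPt
      rw [hPeval t] at h
      simpa [hhfam] using h) hrel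
  have hlast := congrFun this (Fin.last r)
  simp [hc'] at hlast

/-- if `γ` is flat, `X` is regular, and the bilinear form restricted to
`γ^X(V)` is nondegenerate, then the kernel of `γ^X` equals the right nullity of `γ`. -/
theorem stmt2 {𝔽 U V W : Type*} [RCLike 𝔽]
    [AddCommGroup U] [Module 𝔽 U] [FiniteDimensional 𝔽 U]
    [AddCommGroup V] [Module 𝔽 V] [FiniteDimensional 𝔽 V]
    [AddCommGroup W] [Module 𝔽 W] [FiniteDimensional 𝔽 W]
    (B : LinearMap.BilinForm 𝔽 W) (hBsymm : ∀ v w : W, B v w = B w v)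
    (γ : U →ₗ[𝔽] V →ₗ[𝔽] W)
    (hflat : ∀ (X Y : U) (Z Wv : V), B (γ X Z) (γ Y Wv) = B (γ Y Z) (γ X Wv))
    (X : U) (hX : IsRegularElement γ X)
    (hnondeg : LinearMap.range (γ X) ⊓ B.orthogonal (LinearMap.range (γ X)) = ⊥) :
    ∀ Z : V, γ X Z = 0 → ∀ Y : U, γ Y Z = 0 := by
  intro Z hZ Y
  have hmem : γ Y Z ∈ LinearMap.range (γ X) := key_mem_range γ X hX Z hZ Y
  have horth : γ Y Z ∈ B.orthogonal (LinearMap.range (γ X)) := by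
    intro n hn
    obtain ⟨w, rfl⟩ := hn
    show B (γ X w) (γ Y Z) = 0
    rw [hflat X Y w Z, hZ]
    simp
  have : γ Y Z ∈ LinearMap.range (γ X) ⊓ B.orthogonal (LinearMap.range (γ X)) :=
    ⟨hmem, horth⟩
  rw [hnondeg] at this
  simpa using this
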